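/- Let n ≥ 1 and let α, β > 0 be real constants. Then there exists a constant γ > 0, depending only on α, β and n, such that for every pair of n×n Hermitian positive definite complex matrices A and B satisfying (i) B − α·A is positive semidefinite and (ii) det B ≤ β · det A (both determinants being positive real numbers), the matrix γ·A − B is positive semidefinite. (Lemma 6.3 of the paper.) -/

import Mathlib

open scoped ComplexOrder

/-- Lemma 6.3: if `B ≥ α A` and `det B ≤ β det A` for positive definite Hermitian
matrices `A`, `B`, then `B ≤ γ A` for a constant `γ` depending only on `α`, `β`, `n`. -/
theorem ricci_metric_lemma_lin100 (n : ℕ) (hn : 1 ≤ n) (α β : ℝ)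
    (hα : 0 < α) (hβ : 0 < β) :
    ∃ γ : ℝ, 0 < γ ∧ ∀ A B : Matrix (Fin n) (Fin n) ℂ,
      A.PosDef → B.PosDef → (B - (α : ℂ) • A).PosSemidef →
      B.det.re ≤ β * A.det.re → ((γ : ℂ) • A - B).PosSemidef := by
  classical
  set γ : ℝ := β / α ^ (n - 1) with hγ
  refine ⟨γ, div_pos hβ (pow_pos hα _), fun A B hA hB hBA hdet => ?_⟩
  set S : Matrix (Fin n) (Fin n) ℂ := (open scoped MatrixOrder in CFC.sqrt A) with hSdef
  have hSps : S.PosSemidef :=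
    (open scoped MatrixOrder in Matrix.nonneg_iff_posSemidef.mp (CFC.sqrt_nonneg A))
  have hSH : S.IsHermitian := hSps.1
  have hSS : S * S = A :=
    (open scoped MatrixOrder in CFC.sqrt_mul_sqrt_self A hA.posSemidef.nonneg)
  have hAdet : A.det ≠ 0 := hA.det_pos.ne'
  have hSdet : IsUnit S.det := by
    rw [isUnit_iff_ne_zero]
    intro h
    apply hAdet
    rw [← hSS, Matrix.det_mul, h, mul_zero]
  set T : Matrix (Fin n) (Fin n) ℂ := S⁻¹ with hTdef
  have hTS : T * S = 1 := Matrix.nonsing_inv_mul S hSdet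
  have hST : S * T = 1 := Matrix.mul_nonsing_inv S hSdet
  have hTH : T.IsHermitian := by
    rw [Matrix.IsHermitian, hTdef, Matrix.conjTranspose_nonsing_inv, hSH.eq]
  set C : Matrix (Fin n) (Fin n) ℂ := T * B * T with hCdef
  have hCps : C.PosSemidef := by
    have := hB.posSemidef.conjTranspose_mul_mul_same T
    rwa [hTH.eq] at this
  have hCH : C.IsHermitian := hCps.1
  have hTAT : T * A * T = 1 := by
    rw [← hSS]
    simp only [← mul_assoc]
    rw [hTS, one_mul, hST]
  -- eigenvalues of C
  set lam : Fin n → ℝ := hCH.eigenvalues with hlam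
  -- lower bound
  have hCα : (C - (α : ℂ) • 1).PosSemidef := by
    have h1 : T * (B - (α : ℂ) • A) * T = C - (α : ℂ) • 1 := by
      rw [Matrix.mul_sub, Matrix.sub_mul, mul_smul_comm, smul_mul_assoc, hTAT]
    have := hBA.conjTranspose_mul_mul_same T
    rwa [hTH.eq, h1] at this
  have hlow : ∀ i, α ≤ lam i := by
    intro i
    set v : Fin n → ℂ := ⇑(hCH.eigenvectorBasis i) with hv
    have hv1 : dotProduct (star v) v = 1 := by
      have h := hCH.eigenvectorBasis.orthonormal.1 i
      have h2 : (inner ℂ (hCH.eigenvectorBasis i) (hCH.eigenvectorBasis i) : ℂ) = 1 := by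
        rw [@inner_self_eq_norm_sq_to_K ℂ]
        rw [h]; norm_num
      rw [EuclideanSpace.inner_eq_star_dotProduct, dotProduct_comm] at h2
      exact h2
    have hmv : Matrix.mulVec (C - (α : ℂ) • 1) v = ((lam i - α : ℝ) : ℂ) • v := by
      rw [Matrix.sub_mulVec, Matrix.smul_mulVec, Matrix.one_mulVec]
      have := hCH.mulVec_eigenvectorBasis i
      rw [this]
      rw [RCLike.real_smul_eq_coe_smul (K := ℂ)]
      push_cast
      rw [sub_smul]
      rfl
    have h0 := hCα.dotProduct_mulVec_nonneg v
    rw [hmv] at h0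
    have : dotProduct (star v) (((lam i - α : ℝ) : ℂ) • v)
        = ((lam i - α : ℝ) : ℂ) := by
      rw [dotProduct_smul, hv1, smul_eq_mul, mul_one]
    rw [this, Complex.zero_le_real] at h0
    linarith
  have hlam_pos : ∀ i, 0 < lam i := fun i => lt_of_lt_of_le hα (hlow i)
  -- determinant relation
  have hSCS : S * C * S = B := by
    rw [hCdef]
    simp only [← mul_assoc]
    rw [hST, one_mul, mul_assoc, hTS, mul_one]
  have hdetB_eq : B.det = A.det * C.det := by
    rw [← hSCS, ← hSS]
    simp only [Matrix.det_mul]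
    ring
  have hdetC : C.det = ((∏ i, lam i : ℝ) : ℂ) := by
    rw [hCH.det_eq_prod_eigenvalues]
    push_cast
    rfl
  have hdetA_re : A.det = (A.det.re : ℂ) ∧ 0 < A.det.re := by
    have := hA.det_pos
    rw [Complex.lt_def] at this
    obtain ⟨h1, h2⟩ := this
    constructor
    · apply Complex.ext <;> simp [← h2]
    · simpa using h1
  have hprod : ∏ i, lam i ≤ β := by
    have h1 : B.det.re = A.det.re * ∏ i, lam i := by
      rw [hdetB_eq, hdetC]
      conv_lhs => rw [hdetA_re.1]
      rw [← Complex.ofReal_mul, Complex.ofReal_re]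
    rw [h1] at hdet
    have := hdetA_re.2
    nlinarith
  -- upper bound on eigenvalues
  have hup : ∀ i, lam i ≤ γ := by
    intro i
    rw [hγ, le_div_iff₀ (pow_pos hα _)]
    have h1 : α ^ (n - 1) ≤ ∏ j ∈ Finset.univ.erase i, lam j := by
      have := Finset.prod_le_prod (f := fun _ : Fin n => α) (g := lam)
        (s := Finset.univ.erase i) (fun j _ => le_of_lt hα) (fun j _ => hlow j)
      rwa [Finset.prod_const, Finset.card_erase_of_mem (Finset.mem_univ i),
        Finset.card_univ, Fintype.card_fin] at this
    calc lam i * α ^ (n - 1) ≤ lam i * ∏ j ∈ Finset.univ.erase i, lam j := by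
          apply mul_le_mul_of_nonneg_left h1 (le_of_lt (hlam_pos i))
      _ = ∏ j, lam j := Finset.mul_prod_erase Finset.univ lam (Finset.mem_univ i)
      _ ≤ β := hprod
  -- γ • 1 - C is PSD
  set U : Matrix (Fin n) (Fin n) ℂ := (hCH.eigenvectorUnitary : Matrix (Fin n) (Fin n) ℂ)
    with hU
  have hγC : ((γ : ℂ) • 1 - C).PosSemidef := by
    have hd : Matrix.diagonal (fun i => ((γ - lam i : ℝ) : ℂ))
        = (γ : ℂ) • 1 - Matrix.diagonal (RCLike.ofReal ∘ lam) := by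
      rw [Matrix.smul_one_eq_diagonal, Matrix.diagonal_sub]
      congr 1
      funext i
      simp [Function.comp, Complex.ofReal_sub]
    have key : U * Matrix.diagonal (fun i => ((γ - lam i : ℝ) : ℂ)) * star U
        = (γ : ℂ) • 1 - C := by
      have hUU : U * star U = 1 :=
        Matrix.mem_unitaryGroup_iff.mp hCH.eigenvectorUnitary.2
      rw [hd, Matrix.mul_sub, Matrix.sub_mul, mul_smul_comm,
        smul_mul_assoc, mul_one, hUU, hlam, ← Unitary.conjStarAlgAut_apply (S := ℂ), ← hCH.spectral_theorem]
    have hdiag : (Matrix.diagonal (fun i => ((γ - lam i : ℝ) : ℂ))).PosSemidef := by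
      rw [Matrix.posSemidef_diagonal_iff]
      intro i
      rw [Complex.zero_le_real]
      linarith [hup i]
    have := hdiag.mul_mul_conjTranspose_same U
    rwa [← Matrix.star_eq_conjTranspose, key] at this
  -- conjugate back by S
  have hfinal : S * ((γ : ℂ) • 1 - C) * S = (γ : ℂ) • A - B := by
    rw [Matrix.mul_sub, Matrix.sub_mul, mul_smul_comm, smul_mul_assoc,
      mul_one, hSS, hSCS]
  have := hγC.conjTranspose_mul_mul_same S
  rwa [hSH.eq, hfinal] at this
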